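/- arXiv:2412.07805 — 2 statements merged into one kernel-verified Lean document; each statement's English description precedes it below -/
import Mathlib

section
/- Let (K_i)_{i∈{0,...,m}} be a simplex-wise filtration of simplicial complexes, and suppose K_i = K_{i-1} ∪ {σ_i} where σ_i is a q-simplex. Then ∂σ_i ∈ B_{q-1}(K_{i-1}) if and only if σ_i gives birth to a degree-q homology class. -/
set_option maxSynthPendingDepth 2

/-! Simplicial ℤ/2 chains and homology machinery. -/

/-- Chains with `ℤ/2` coefficients, formal sums of finite subsets of `V`. -/
abbrev Ch (V : Type*) := Finset V →₀ ZMod 2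

/-- The simplicial boundary operator: a simplex with at least two vertices is sent
to the sum of its codimension-1 faces; vertices are sent to `0`. -/
noncomputable def bdry (V : Type*) [DecidableEq V] : Ch V →ₗ[ZMod 2] Ch V :=
  Finsupp.linearCombination (ZMod 2) fun σ : Finset V =>
    if σ.card ≤ 1 then 0 else ∑ v ∈ σ, Finsupp.single (σ.erase v) (1 : ZMod 2)

/-- A simplicial complex: a collection of nonempty finite subsets of `V`
closed under taking nonempty subsets. -/
def IsComplex {V : Type*} (K : Set (Finset V)) : Prop :=
  ∀ σ ∈ K, σ.Nonempty ∧ ∀ τ ⊆ σ, τ.Nonempty → τ ∈ K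

/-- The space of chains supported on simplices of `K` with `k` vertices
(i.e. the simplicial chain group of degree `k - 1`). -/
noncomputable def chainCard {V : Type*} [DecidableEq V] (K : Set (Finset V)) (k : ℕ) :
    Submodule (ZMod 2) (Ch V) :=
  Submodule.span (ZMod 2) {f | ∃ σ ∈ K, σ.card = k ∧ f = Finsupp.single σ 1}

theorem chainCard_mono {V : Type*} [DecidableEq V] {K₁ K₂ : Set (Finset V)}
    (h : K₁ ⊆ K₂) (k : ℕ) : chainCard K₁ k ≤ chainCard K₂ k := by
  apply Submodule.span_mono
  rintro f ⟨σ, hσ, hc, rfl⟩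
  exact ⟨σ, h hσ, hc, rfl⟩

/-- Cycles (in cardinality grading `k`, i.e. degree `k-1`) of a chain subcomplex `W`. -/
noncomputable def cyclesOf {V : Type*} [DecidableEq V] (W : ℕ → Submodule (ZMod 2) (Ch V)) (k : ℕ) :
    Submodule (ZMod 2) (Ch V) :=
  W k ⊓ LinearMap.ker (bdry V)

/-- Boundaries (in cardinality grading `k`, i.e. degree `k-1`) of a chain subcomplex `W`. -/
noncomputable def bdriesOf {V : Type*} [DecidableEq V] (W : ℕ → Submodule (ZMod 2) (Ch V)) (k : ℕ) :
    Submodule (ZMod 2) (Ch V) :=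
  Submodule.map (bdry V) (W (k + 1))

/-- Homology of the chain complex `W` in cardinality grading `k` (degree `k - 1`):
cycles modulo boundaries. -/
abbrev homolOf {V : Type*} [DecidableEq V] (W : ℕ → Submodule (ZMod 2) (Ch V)) (k : ℕ) :=
  ↥(cyclesOf W k) ⧸ (bdriesOf W k).comap (cyclesOf W k).subtype

/-- The map on homology induced by a degreewise inclusion of chain complexes. -/
noncomputable def homolMap {V : Type*} [DecidableEq V]
    (W W' : ℕ → Submodule (ZMod 2) (Ch V)) (h : ∀ k, W k ≤ W' k) (k : ℕ) :
    homolOf W k →ₗ[ZMod 2] homolOf W' k :=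
  Submodule.mapQ _ _ (Submodule.inclusion (inf_le_inf (h k) le_rfl))
    (by
      intro x hx
      simp only [Submodule.mem_comap, Submodule.subtype_apply, Submodule.coe_inclusion]
        at hx ⊢
      exact Submodule.map_mono (h (k + 1)) hx)

/-! Persistence: birth and death in a simplex-wise filtration. -/

/-- The class `γ ∈ H_{k-1}(K j)` is born at index `j`: for every `j' < j`
no class of `H_{k-1}(K j')` is mapped to `γ` by the map induced by inclusion. -/
def BornAt {V : Type*} [DecidableEq V] (K : ℕ → Set (Finset V)) (k j : ℕ)
    (γ : homolOf (chainCard (K j)) k) : Prop :=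
  ∀ j' < j, ∀ (h : K j' ⊆ K j), ∀ β : homolOf (chainCard (K j')) k,
    homolMap (chainCard (K j')) (chainCard (K j)) (fun n => chainCard_mono h n) k β ≠ γ

/-- At index `d`, the image of the class `γ ∈ H_{k-1}(K j)` agrees with the image of
a class present strictly before index `j`. -/
def MergesAt {V : Type*} [DecidableEq V] (K : ℕ → Set (Finset V)) (k j : ℕ)
    (γ : homolOf (chainCard (K j)) k) (d : ℕ) : Prop :=
  ∃ j' < j, ∃ β : homolOf (chainCard (K j')) k,
    ∀ (h : K j ⊆ K d) (h' : K j' ⊆ K d),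
      homolMap (chainCard (K j)) (chainCard (K d)) (fun n => chainCard_mono h n) k γ =
      homolMap (chainCard (K j')) (chainCard (K d)) (fun n => chainCard_mono h' n) k β

/-- The class `γ ∈ H_{k-1}(K j)`, born at `j`, dies at index `d`: `d` is the smallest
index at which the image of `γ` coincides with the image of a class from an index
strictly before `j`. -/
def DiesAt {V : Type*} [DecidableEq V] (K : ℕ → Set (Finset V)) (k j : ℕ)
    (γ : homolOf (chainCard (K j)) k) (d : ℕ) : Prop :=
  j ≤ d ∧ MergesAt K k j γ d ∧ ∀ d', j ≤ d' → d' < d → ¬ MergesAt K k j γ d'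

/-- The simplex added at index `i` gives birth to a homology class of degree `k - 1`. -/
def GivesBirth {V : Type*} [DecidableEq V] (K : ℕ → Set (Finset V)) (k i : ℕ) : Prop :=
  ∃ γ : homolOf (chainCard (K i)) k, BornAt K k i γ

/-- The simplex added at index `i` kills a homology class of degree `k - 1`. -/
def Kills {V : Type*} [DecidableEq V] (K : ℕ → Set (Finset V)) (k i : ℕ) : Prop :=
  ∃ j, ∃ γ : homolOf (chainCard (K j)) k, BornAt K k j γ ∧ DiesAt K k j γ i

/-! ### Auxiliary lemmas -/

lemma chainCard_eq_supported {V : Type*} [DecidableEq V] (K : Set (Finset V)) (k : ℕ) :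
    chainCard K k = Finsupp.supported (ZMod 2) (ZMod 2) {σ | σ ∈ K ∧ σ.card = k} := by
  rw [Finsupp.supported_eq_span_single, chainCard]
  congr 1
  ext f
  simp only [Set.mem_setOf_eq, Set.mem_image]
  constructor
  · rintro ⟨σ, h1, h2, rfl⟩; exact ⟨σ, ⟨h1, h2⟩, rfl⟩
  · rintro ⟨σ, ⟨h1, h2⟩, rfl⟩; exact ⟨σ, h1, h2, rfl⟩

lemma mem_chainCard {V : Type*} [DecidableEq V] {K : Set (Finset V)} {k : ℕ} {f : Ch V} :
    f ∈ chainCard K k ↔ ∀ τ ∈ f.support, τ ∈ K ∧ τ.card = k := by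
  rw [chainCard_eq_supported, Finsupp.mem_supported]
  constructor
  · intro h τ hτ; exact h hτ
  · intro h τ hτ; exact h τ hτ

lemma single_mem_chainCard {V : Type*} [DecidableEq V] {K : Set (Finset V)} {k : ℕ}
    {σ : Finset V} (h : σ ∈ K) (hc : σ.card = k) :
    (Finsupp.single σ 1 : Ch V) ∈ chainCard K k :=
  Submodule.subset_span ⟨σ, h, hc, rfl⟩

lemma coeff_zero {V : Type*} [DecidableEq V] {K : Set (Finset V)} {k : ℕ} {f : Ch V}
    (hf : f ∈ chainCard K k) {σ : Finset V} (hσ : σ ∉ K) : f σ = 0 := by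
  by_contra h
  exact hσ ((mem_chainCard.mp hf σ (Finsupp.mem_support_iff.mpr h)).1)

lemma bdry_single {V : Type*} [DecidableEq V] (σ : Finset V) :
    bdry V (Finsupp.single σ 1) =
      if σ.card ≤ 1 then 0 else ∑ v ∈ σ, Finsupp.single (σ.erase v) (1 : ZMod 2) := by
  simp [bdry, Finsupp.linearCombination_single]

lemma bdry_mem_chainCard {V : Type*} [DecidableEq V] {K : Set (Finset V)} (hK : IsComplex K)
    (k : ℕ) {f : Ch V} (hf : f ∈ chainCard K (k + 1)) : bdry V f ∈ chainCard K k := by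
  induction hf using Submodule.span_induction with
  | mem g hg =>
      obtain ⟨σ, hσ, hc, rfl⟩ := hg
      rw [bdry_single]
      split_ifs with h
      · exact (chainCard K k).zero_mem
      · apply Submodule.sum_mem
        intro v hv
        refine single_mem_chainCard ?_ ?_
        · exact (hK σ hσ).2 _ (Finset.erase_subset _ _) (by
            rw [← Finset.card_pos, Finset.card_erase_of_mem hv, hc]; omega)
        · rw [Finset.card_erase_of_mem hv, hc]; omega
  | zero => simp
  | add x y _ _ hx hy => rw [map_add]; exact add_mem hx hy
  | smul c x _ hx => rw [map_smul]; exact Submodule.smul_mem _ _ hx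

/-- In a simplex-wise filtration, if the simplex `σ i` added at step `i`
is a `q`-simplex, then `∂ σ i ∈ B_{q-1}(K (i-1))` if and only if `σ i` gives birth to a
degree-`q` homology class. -/
theorem boundary_mem_iff_givesBirth {V : Type*} [Fintype V] [DecidableEq V]
    (m : ℕ) (K : ℕ → Set (Finset V)) (σs : ℕ → Finset V)
    (hK0 : K 0 = ∅)
    (hcx : ∀ i ≤ m, IsComplex (K i))
    (hstep : ∀ i, 1 ≤ i → i ≤ m → σs i ∉ K (i - 1) ∧ K i = K (i - 1) ∪ {σs i})
    (q i : ℕ) (hi1 : 1 ≤ i) (him : i ≤ m) (hq : (σs i).card = q + 1) :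
    bdry V (Finsupp.single (σs i) 1) ∈ bdriesOf (chainCard (K (i - 1))) q ↔
      GivesBirth K (q + 1) i := by
  obtain ⟨hσnot, hKi⟩ := hstep i hi1 him
  have hmono : ∀ a b : ℕ, a ≤ b → b ≤ m → K a ⊆ K b := by
    intro a b hab
    induction b, hab using Nat.le_induction with
    | base => exact fun _ => subset_rfl
    | succ n hn ih =>
      intro hbm
      refine (ih (by omega)).trans ?_
      have h2 := (hstep (n + 1) (by omega) hbm).2
      rw [Nat.add_sub_cancel] at h2
      rw [h2]
      exact Set.subset_union_left
  have hsub : K (i - 1) ⊆ K i := by rw [hKi]; exact Set.subset_union_left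
  have hcxp : IsComplex (K (i - 1)) := hcx (i - 1) (by omega)
  have hneg : ∀ v : Ch V, -v = v := by
    intro v; ext t
    rw [Finsupp.neg_apply]
    have : ∀ a : ZMod 2, -a = a := by decide
    exact this _
  have hcc2 : chainCard (K i) (q + 1 + 1) = chainCard (K (i - 1)) (q + 1 + 1) := by
    refine le_antisymm ?_ (chainCard_mono hsub _)
    intro f hf
    rw [mem_chainCard] at hf ⊢
    intro τ hτ
    obtain ⟨hτK, hc⟩ := hf τ hτ
    rw [hKi] at hτK
    rcases hτK with h | h
    · exact ⟨h, hc⟩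
    · exfalso
      rw [Set.mem_singleton_iff] at h
      subst h
      omega
  constructor
  · intro hb
    obtain ⟨τ, hτ, hτe⟩ := hb
    set z : Ch V := Finsupp.single (σs i) 1 - τ with hzdef
    have hσKi : σs i ∈ K i := by rw [hKi]; exact Or.inr rfl
    have hz1 : z ∈ chainCard (K i) (q + 1) :=
      sub_mem (single_mem_chainCard hσKi hq) (chainCard_mono hsub _ hτ)
    have hz2 : z ∈ LinearMap.ker (bdry V) := by
      rw [LinearMap.mem_ker, hzdef, map_sub, hτe, sub_self]
    refine ⟨Submodule.Quotient.mk ⟨z, Submodule.mem_inf.mpr ⟨hz1, hz2⟩⟩, ?_⟩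
    intro j' hj' h β hβ
    obtain ⟨b, rfl⟩ := Submodule.Quotient.mk_surjective _ β
    simp only [homolMap, Submodule.mapQ_apply] at hβ
    rw [Submodule.Quotient.eq] at hβ
    simp only [Submodule.mem_comap, Submodule.subtype_apply, AddSubgroupClass.coe_sub,
      Submodule.coe_inclusion] at hβ
    rw [bdriesOf] at hβ
    obtain ⟨w, hw, hwe⟩ := hβ
    rw [hcc2] at hw
    have h1 : bdry V w (σs i) = 0 :=
      coeff_zero (bdry_mem_chainCard hcxp _ hw) hσnot
    have hσj' : σs i ∉ K j' := fun hmem => hσnot (hmono j' (i - 1) (by omega) (by omega) hmem)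
    have h2 : (b : Ch V) (σs i) = 0 :=
      coeff_zero (Submodule.mem_inf.mp b.2).1 hσj'
    have h3 : z (σs i) = 1 := by
      rw [hzdef, Finsupp.sub_apply, Finsupp.single_eq_same, coeff_zero hτ hσnot, sub_zero]
    have hcf := DFunLike.congr_fun hwe (σs i)
    rw [h1, Finsupp.sub_apply] at hcf
    change (0 : ZMod 2) = (b : Ch V) (σs i) - z (σs i) at hcf
    rw [h2, h3] at hcf
    revert hcf; decide
  · rintro ⟨γ, hγ⟩
    obtain ⟨x, rfl⟩ := Submodule.Quotient.mk_surjective _ γ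
    have hx1 : (x : Ch V) ∈ chainCard (K i) (q + 1) := (Submodule.mem_inf.mp x.2).1
    have hx2k : (x : Ch V) ∈ LinearMap.ker (bdry V) := (Submodule.mem_inf.mp x.2).2
    have hx2 : bdry V (x : Ch V) = 0 := LinearMap.mem_ker.mp hx2k
    by_cases ha : (x : Ch V) (σs i) = 0
    · exfalso
      have hxm : (x : Ch V) ∈ chainCard (K (i - 1)) (q + 1) := by
        rw [mem_chainCard] at hx1 ⊢
        intro τ hτ
        obtain ⟨hτK, hc⟩ := hx1 τ hτ
        rw [hKi] at hτK
        rcases hτK with h | h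
        · exact ⟨h, hc⟩
        · rw [Set.mem_singleton_iff] at h
          subst h
          exact absurd ha (Finsupp.mem_support_iff.mp hτ)
      refine hγ (i - 1) (by omega) hsub
        (Submodule.Quotient.mk ⟨x, Submodule.mem_inf.mpr ⟨hxm, hx2k⟩⟩) ?_
      simp only [homolMap, Submodule.mapQ_apply]
      congr 1
    · have ha1 : (x : Ch V) (σs i) = 1 := by
        have h2 : ∀ b : ZMod 2, b ≠ 0 → b = 1 := by decide
        exact h2 _ ha
      set z' : Ch V := (x : Ch V) - Finsupp.single (σs i) 1 with hz'
      have hz'm : z' ∈ chainCard (K (i - 1)) (q + 1) := by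
        rw [mem_chainCard]
        intro τ hτ
        have hτne : τ ≠ σs i := by
          rintro rfl
          apply Finsupp.mem_support_iff.mp hτ
          rw [hz', Finsupp.sub_apply, Finsupp.single_eq_same, ha1, sub_self]
        have hτx : τ ∈ (x : Ch V).support := by
          rw [Finsupp.mem_support_iff]
          have h3 := Finsupp.mem_support_iff.mp hτ
          rwa [hz', Finsupp.sub_apply, Finsupp.single_eq_of_ne' (Ne.symm hτne), sub_zero] at h3
        obtain ⟨hτK, hc⟩ := mem_chainCard.mp hx1 τ hτx
        rw [hKi] at hτK
        rcases hτK with h | h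
        · exact ⟨h, hc⟩
        · rw [Set.mem_singleton_iff] at h
          exact absurd h hτne
      rw [bdriesOf]
      refine ⟨z', hz'm, ?_⟩
      rw [hz', map_sub, hx2, zero_sub]
      exact hneg _
end

section
/- Let K be a finite simplicial complex with an acyclic partial matching μ : M → M. If σ ∈ C_q(K) has support contained in M^↑ and ∂σ = 0, then σ = 0. -/
set_option maxSynthPendingDepth 2

/-! Discrete Morse theory: partial matchings, acyclicity, the closure map. -/

/-- `Covers σ τ`: `σ` covers `τ` in the face poset, i.e. `τ ⊆ σ` in codimension one. -/
def Covers {V : Type*} (σ τ : Finset V) : Prop :=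
  τ ⊆ σ ∧ σ.card = τ.card + 1

/-- A partial matching: an involution `μ` on a set `M` of simplices matching each
simplex with a simplex that covers it or that it covers. -/
structure PartialMatching (V : Type*) where
  M : Set (Finset V)
  μ : Finset V → Finset V
  mem_M : ∀ σ ∈ M, μ σ ∈ M
  invol : ∀ σ ∈ M, μ (μ σ) = σ
  matched : ∀ σ ∈ M, Covers (μ σ) σ ∨ Covers σ (μ σ)

/-- Acyclicity of a partial matching: there is no cyclic sequence
`σ₁ ≻ μ(σ₁) ≺ σ₂ ≻ μ(σ₂) ≺ ⋯ ≺ σ_l ≻ μ(σ_l) ≺ σ₁` with `l ≥ 2` and the `σᵢ` distinct. -/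
def PartialMatching.Acyclic {V : Type*} (m : PartialMatching V) : Prop :=
  ¬ ∃ (l : ℕ) (f : ℕ → Finset V), 2 ≤ l ∧
      (∀ i < l, ∀ j < l, f i = f j → i = j) ∧
      (∀ i < l, f i ∈ m.M ∧ Covers (f i) (m.μ (f i))) ∧
      (∀ i < l, Covers (f ((i + 1) % l)) (m.μ (f i)))

/-- `M^↑`: matched simplices lying above their partner. -/
def Mup {V : Type*} (m : PartialMatching V) : Set (Finset V) :=
  {σ | σ ∈ m.M ∧ Covers σ (m.μ σ)}

/-- `M_q^↑` in cardinality grading: elements of `M^↑` with `k` vertices (degree `k-1`). -/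
def MupCard {V : Type*} (m : PartialMatching V) (k : ℕ) : Set (Finset V) :=
  {σ | σ ∈ Mup m ∧ σ.card = k}

/-- `R_q(μ)` in cardinality grading: the unmatched (critical) simplices of `K`
with `k` vertices (degree `k-1`). -/
def Rcard {V : Type*} (K : Set (Finset V)) (m : PartialMatching V) (k : ℕ) :
    Set (Finset V) :=
  {σ | σ ∈ K ∧ σ.card = k ∧ σ ∉ m.M}

/-- `(α, β)` is an edge of the graph `G(μ)`: `μ β` is defined, `β` lies above its
partner, and `α` covers `μ β` (with `β ≠ α`). -/
def IsEdge {V : Type*} (m : PartialMatching V) (α β : Finset V) : Prop :=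
  β ≠ α ∧ β ∈ m.M ∧ Covers β (m.μ β) ∧ Covers α (m.μ β)

open scoped Classical in
/-- `φ` is the closure map of the matching `m` on `K`: it satisfies the defining
recursion `φ α = α + ∑ φ β` over the edges `(α, β)` emanating from `α` in `G(μ)`. -/
def IsClosure {V : Type*} [Fintype V] [DecidableEq V] (K : Set (Finset V))
    (m : PartialMatching V) (φ : Finset V → Ch V) : Prop :=
  ∀ α ∈ K, φ α = Finsupp.single α 1 + ∑ β : Finset V, if IsEdge m α β then φ β else 0

/-- The degree-`(k-1)` chain group of the Morse (critical) complex of `C`: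
the span of the closures of the unmatched simplices of `C` with `k` vertices. -/
noncomputable def critWOn {V : Type*} [DecidableEq V] (C : Set (Finset V))
    (m : PartialMatching V) (φ : Finset V → Ch V) (k : ℕ) :
    Submodule (ZMod 2) (Ch V) :=
  Submodule.span (ZMod 2) {f | ∃ γ, γ ∈ C ∧ γ.card = k ∧ γ ∉ m.M ∧ f = φ γ}

theorem critWOn_mono {V : Type*} [DecidableEq V] {C₁ C₂ : Set (Finset V)}
    (h : C₁ ⊆ C₂) (m : PartialMatching V) (φ : Finset V → Ch V) (k : ℕ) :
    critWOn C₁ m φ k ≤ critWOn C₂ m φ k := by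
  apply Submodule.span_mono
  rintro f ⟨γ, hγ, hc, hm, rfl⟩
  exact ⟨γ, h hγ, hc, hm, rfl⟩

/-- The degree-`(k-1)` chain group of the complex `Match`, spanned by `M_{k-1}^↑`
together with the boundaries of the elements of `M_k^↑`. -/
noncomputable def matchW {V : Type*} [DecidableEq V] (m : PartialMatching V) (k : ℕ) :
    Submodule (ZMod 2) (Ch V) :=
  Submodule.span (ZMod 2)
    ({f | ∃ σ ∈ MupCard m k, f = Finsupp.single σ 1} ∪
      {f | ∃ β ∈ MupCard m (k + 1), f = bdry V (Finsupp.single β 1)})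

/-- The set `B_q^R ∪ B_q^↑ ∪ B_q^↓` (in cardinality grading `k = q + 1`). -/
noncomputable def morseBasis {V : Type*} [DecidableEq V] (K : Set (Finset V))
    (m : PartialMatching V) (φ : Finset V → Ch V) (k : ℕ) : Set (Ch V) :=
  {f | ∃ γ ∈ Rcard K m k, f = φ γ} ∪
    ({f | ∃ σ ∈ MupCard m k, f = Finsupp.single σ 1} ∪
      {f | ∃ β ∈ MupCard m (k + 1), f = bdry V (Finsupp.single β 1)})


lemma bdry_single_of_covers {V : Type*} [DecidableEq V] {α τ : Finset V}
    (h2 : 2 ≤ α.card) (hc : Covers α τ) :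
    (bdry V (Finsupp.single α 1)) τ = 1 := by
  rw [bdry, Finsupp.linearCombination_single, one_smul, if_neg (by omega)]
  obtain ⟨hsub, hcard⟩ := hc
  have hne : (α \ τ).Nonempty := by
    rw [← Finset.card_pos, Finset.card_sdiff_of_subset hsub]; omega
  obtain ⟨v, hv⟩ := hne
  have hvα : v ∈ α := (Finset.mem_sdiff.mp hv).1
  have hvτ : v ∉ τ := (Finset.mem_sdiff.mp hv).2
  have herase : α.erase v = τ := by
    refine (Finset.eq_of_subset_of_card_le ?_ ?_).symm
    · intro x hx
      exact Finset.mem_erase.mpr ⟨fun h => hvτ (h ▸ hx), hsub hx⟩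
    · rw [Finset.card_erase_of_mem hvα]; omega
  rw [Finsupp.finset_sum_apply]
  rw [Finset.sum_eq_single v]
  · rw [herase, Finsupp.single_eq_same]
  · intro w hw hwv
    apply Finsupp.single_eq_of_ne'
    intro h
    have : v ∈ α.erase w := Finset.mem_erase.mpr ⟨(Ne.symm hwv), hvα⟩
    rw [h] at this
    exact hvτ this
  · intro h; exact absurd hvα h

lemma bdry_single_of_not_covers {V : Type*} [DecidableEq V] {α τ : Finset V}
    (hc : ¬ Covers α τ) :
    (bdry V (Finsupp.single α 1)) τ = 0 := by
  rw [bdry, Finsupp.linearCombination_single, one_smul]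
  by_cases h1 : α.card ≤ 1
  · rw [if_pos h1]; rfl
  · rw [if_neg h1, Finsupp.finset_sum_apply]
    apply Finset.sum_eq_zero
    intro v hv
    apply Finsupp.single_eq_of_ne'
    intro h
    exact hc ⟨h ▸ Finset.erase_subset v α, by rw [← h, Finset.card_erase_of_mem hv]; omega⟩

lemma bdry_apply' {V : Type*} [DecidableEq V] (c : Ch V) (τ : Finset V) :
    (bdry V c) τ = ∑ α ∈ c.support, c α * (bdry V (Finsupp.single α 1)) τ := by
  conv_lhs => rw [← Finsupp.sum_single c, Finsupp.sum]
  rw [map_sum, Finsupp.finset_sum_apply]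
  apply Finset.sum_congr rfl
  intro α _
  rw [show Finsupp.single α (c α) = c α • Finsupp.single α (1 : ZMod 2) by
    rw [Finsupp.smul_single', mul_one], map_smul]
  rfl

/-- For a finite simplicial complex `K` with an acyclic partial matching
`μ`, a chain `σ ∈ C_q(K)` whose support is contained in `M^↑` and with `∂σ = 0` is zero. -/
theorem eq_zero_of_support_subset_Mup {V : Type*} [Fintype V] [DecidableEq V]
    (K : Set (Finset V)) (hK : IsComplex K)
    (m : PartialMatching V) (hMK : m.M ⊆ K) (hac : m.Acyclic)
    (q : ℕ) (σ : Ch V) (hσ : σ ∈ chainCard K (q + 1))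
    (hsupp : ∀ τ ∈ σ.support, τ ∈ Mup m) (hcyc : bdry V σ = 0) :
    σ = 0 := by
  classical
  by_contra hne
  have hSne : σ.support.Nonempty := Finsupp.support_nonempty_iff.mpr hne
  set S := σ.support with hS
  have hone : ∀ x : ZMod 2, x ≠ 0 → x = 1 := by decide
  have h2 : ∀ α ∈ S, 2 ≤ α.card := by
    intro α hα
    obtain ⟨hαM, hsubμ, hcard⟩ := hsupp α hα
    have hμK : m.μ α ∈ K := hMK (m.mem_M α hαM)
    have hpos := Finset.card_pos.mpr (hK _ hμK).1
    omega
  have hstep : ∀ α ∈ S, ∃ β ∈ S, β ≠ α ∧ Covers β (m.μ α) := by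
    intro α hα
    by_contra hno
    push_neg at hno
    have h0 : (bdry V σ) (m.μ α) = 0 := by rw [hcyc]; rfl
    rw [bdry_apply'] at h0
    rw [Finset.sum_eq_single_of_mem α hα] at h0
    · rw [bdry_single_of_covers (h2 α hα) (hsupp α hα).2,
        hone _ (Finsupp.mem_support_iff.mp hα), mul_one] at h0
      exact one_ne_zero h0
    · intro β hβ hβα
      rw [bdry_single_of_not_covers (hno β hβ hβα), mul_zero]
  obtain ⟨α₀, hα₀⟩ := hSne
  have hT : ∀ x : {x : Finset V // x ∈ S},
      ∃ y : {x : Finset V // x ∈ S}, (y : Finset V) ≠ x ∧ Covers (y : Finset V) (m.μ x) := by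
    intro x
    obtain ⟨β, hβS, hβne, hβc⟩ := hstep x x.2
    exact ⟨⟨β, hβS⟩, hβne, hβc⟩
  choose g hgne hgcov using hT
  obtain ⟨a, b, hab, heq⟩ :=
    Finite.exists_ne_map_eq_of_infinite (fun n : ℕ => g^[n] (⟨α₀, hα₀⟩ : {x : Finset V // x ∈ S}))
  have key : ∃ (y : {x : Finset V // x ∈ S}) (p : ℕ), 0 < p ∧ Function.IsPeriodicPt g p y := by
    rcases Nat.lt_or_ge a b with h | h
    · refine ⟨g^[a] ⟨α₀, hα₀⟩, b - a, by omega, ?_⟩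
      show g^[b - a] (g^[a] _) = _
      rw [← Function.iterate_add_apply, Nat.sub_add_cancel h.le]
      exact heq.symm
    · have h' : b < a := lt_of_le_of_ne h (fun hh => hab hh.symm)
      refine ⟨g^[b] ⟨α₀, hα₀⟩, a - b, by omega, ?_⟩
      show g^[a - b] (g^[b] _) = _
      rw [← Function.iterate_add_apply, Nat.sub_add_cancel h'.le]
      exact heq
  obtain ⟨y, p, hp, hper⟩ := key
  set l := Function.minimalPeriod g y with hldef
  have hl0 : 0 < l := hper.minimalPeriod_pos hp
  have hlper : Function.IsPeriodicPt g l y := Function.isPeriodicPt_minimalPeriod g y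
  have hl1 : l ≠ 1 := by
    intro h
    have hgy : g y = y := by
      have := hlper
      rw [h] at this
      exact this
    exact hgne y (congrArg Subtype.val hgy)
  refine hac ⟨l, fun i => (g^[i] y : Finset V), by omega, ?_, ?_, ?_⟩
  · intro i hi j hj hij
    exact Function.iterate_injOn_Iio_minimalPeriod (f := g) (x := y) hi hj (Subtype.ext hij)
  · intro i hi
    exact ⟨(hsupp _ (g^[i] y).2).1, (hsupp _ (g^[i] y).2).2⟩
  · intro i hi
    have hmod : g^[(i + 1) % l] y = g (g^[i] y) := by
      rw [hlper.iterate_mod_apply, Function.iterate_succ_apply']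
    show Covers ((g^[(i + 1) % l] y : Finset V)) (m.μ ((g^[i] y : Finset V)))
    rw [hmod]
    exact hgcov _
end
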